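/- Let k be a field of characteristic p > 0 and R = k[x_1,…,x_n], graded by total degree. Let M be a ℤ-graded R-module such that the set {d ∈ ℤ : M_d ≠ 0} is finite and M_{−n} = 0. Then there exists s ∈ ℕ (depending only on the set {d ∈ ℤ : M_d ≠ 0}) such that for every l ≥ s and every ℤ-graded R-module N, the only degree-preserving R-linear map f : M → F^{*l}(N) is the zero map. Here f is degree-preserving if for every d ∈ ℤ, f maps M_d into the degree-d component of F^{*l}(N). -/

import Mathlib

open MvPolynomial TensorProduct

noncomputable section

/-- The target copy of `R = k[x₁,…,xₙ]`, regarded as an algebra over `R`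
via the `l`-th iterate of the Frobenius, `φ_l : r ↦ r ^ (p ^ l)`. -/
def FrobTarget (k : Type) [Field k] (n p l : ℕ) : Type := MvPolynomial (Fin n) k

instance (k : Type) [Field k] (n p l : ℕ) : CommRing (FrobTarget k n p l) :=
  inferInstanceAs (CommRing (MvPolynomial (Fin n) k))

/-- `φ_l : R → R`, `r ↦ r ^ (p ^ l)`, viewed as a ring homomorphism into the target copy. -/
def frobHom (k : Type) [Field k] (n p l : ℕ) [Fact p.Prime] [CharP k p] :
    MvPolynomial (Fin n) k →+* FrobTarget k n p l :=
  iterateFrobenius (MvPolynomial (Fin n) k) p l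

instance (k : Type) [Field k] (n p l : ℕ) [Fact p.Prime] [CharP k p] :
    Algebra (MvPolynomial (Fin n) k) (FrobTarget k n p l) :=
  (frobHom k n p l).toAlgebra

/-- The Frobenius base change `F^{*l}(N) = R ⊗_{φ_l} N`:  the tensor product in which the
left-hand copy of `R` is a right `R`-module via `φ_l`, with `R` acting through the left factor. -/
def Fstar (k : Type) [Field k] (n p l : ℕ) [Fact p.Prime] [CharP k p]
    (N : Type) [AddCommGroup N] [Module (MvPolynomial (Fin n) k) N] : Type :=
  FrobTarget k n p l ⊗[MvPolynomial (Fin n) k] N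

instance (k : Type) [Field k] (n p l : ℕ) [Fact p.Prime] [CharP k p]
    (N : Type) [AddCommGroup N] [Module (MvPolynomial (Fin n) k) N] :
    AddCommGroup (Fstar k n p l N) :=
  inferInstanceAs (AddCommGroup (FrobTarget k n p l ⊗[MvPolynomial (Fin n) k] N))

/-- `R` acts on `F^{*l}(N)` through the left factor. -/
instance (k : Type) [Field k] (n p l : ℕ) [Fact p.Prime] [CharP k p]
    (N : Type) [AddCommGroup N] [Module (MvPolynomial (Fin n) k) N] :
    Module (MvPolynomial (Fin n) k) (Fstar k n p l N) :=
  inferInstanceAs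
    (Module (FrobTarget k n p l) (FrobTarget k n p l ⊗[MvPolynomial (Fin n) k] N))

/-- The canonical identification of `R` with the target copy of `R`. -/
def toT (k : Type) [Field k] (n p l : ℕ) (r : MvPolynomial (Fin n) k) :
    FrobTarget k n p l := r

/-- Elementary tensors `b ⊗ y` in `F^{*l}(N)`. -/
def tensorMk (k : Type) [Field k] (n p l : ℕ) [Fact p.Prime] [CharP k p]
    (N : Type) [AddCommGroup N] [Module (MvPolynomial (Fin n) k) N]
    (b : FrobTarget k n p l) (y : N) : Fstar k n p l N :=
  b ⊗ₜ[MvPolynomial (Fin n) k] y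

/-- The monomial `e_ī = x₁^{i₁} ⋯ xₙ^{iₙ}` in the target copy of `R`. -/
def eMono (k : Type) [Field k] (n p l : ℕ) (v : Fin n → ℕ) : FrobTarget k n p l :=
  toT k n p l (∏ j, X j ^ v j)

/-- The degree-`d` component of `F^{*l}(N)` for a `ℤ`-graded module `N`:  the additive span of
the elementary tensors `r ⊗ y` with `r ∈ R_a`, `y ∈ N_b` and `a + p^l • b = d`. -/
def FstarGrade (k : Type) [Field k] (n p l : ℕ) [Fact p.Prime] [CharP k p]
    (N : Type) [AddCommGroup N] [Module (MvPolynomial (Fin n) k) N]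
    (𝓝 : ℤ → AddSubgroup N) (d : ℤ) : AddSubgroup (Fstar k n p l N) :=
  AddSubgroup.closure { z | ∃ (a : ℕ) (b : ℤ) (r : MvPolynomial (Fin n) k) (y : N),
    r ∈ homogeneousSubmodule (Fin n) k a ∧ y ∈ 𝓝 b ∧ (a : ℤ) + (p : ℤ) ^ l * b = d ∧
    z = tensorMk k n p l N (toT k n p l r) y }

/-- The top multi-index `(p^l − 1, …, p^l − 1)`. -/
def topIdx (n p l : ℕ) [Fact p.Prime] : Fin n → Fin (p ^ l) :=
  fun _ => ⟨p ^ l - 1, Nat.sub_lt (pow_pos (Fact.out : p.Prime).pos l) one_pos⟩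

namespace S4

/-! ### Contraction of polynomials along `u ↦ q • u + v`. -/

variable {k : Type} [Field k] {n : ℕ}

lemma expand_inj {q : ℕ} (hq : 0 < q) (v : Fin n →₀ ℕ) :
    Function.Injective (fun u : Fin n →₀ ℕ => q • u + v) := by
  intro a b h
  have h' : q • a = q • b := add_right_cancel h
  ext i
  have := congrFun (congrArg (fun f : Fin n →₀ ℕ => (f : Fin n → ℕ)) h') i
  simp only [Finsupp.coe_smul, Pi.smul_apply, smul_eq_mul] at this
  exact Nat.eq_of_mul_eq_mul_left hq this

def contr (lam : k → k) (h0 : lam 0 = 0) (q : ℕ) (hq : 0 < q)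
    (v : Fin n →₀ ℕ) (r : MvPolynomial (Fin n) k) : MvPolynomial (Fin n) k :=
  AddMonoidAlgebra.ofCoeff (Finsupp.mapRange lam h0
    (Finsupp.comapDomain (fun u : Fin n →₀ ℕ => q • u + v) (AddMonoidAlgebra.coeff r)
      ((expand_inj hq v).injOn)))

lemma coeff_contr (lam : k → k) (h0 : lam 0 = 0) (q : ℕ) (hq : 0 < q)
    (v : Fin n →₀ ℕ) (r : MvPolynomial (Fin n) k) (u : Fin n →₀ ℕ) :
    coeff u (contr lam h0 q hq v r) = lam (coeff (q • u + v) r) := rfl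

lemma contr_add (lam : k → k) (h0 : lam 0 = 0) (hadd : ∀ a b, lam (a + b) = lam a + lam b)
    (q : ℕ) (hq : 0 < q) (v : Fin n →₀ ℕ) (r s : MvPolynomial (Fin n) k) :
    contr lam h0 q hq v (r + s) = contr lam h0 q hq v r + contr lam h0 q hq v s := by
  apply MvPolynomial.ext
  intro m
  rw [coeff_add, coeff_contr, coeff_contr, coeff_contr, coeff_add, hadd]

lemma contr_monomial_mul (lam : k → k) (h0 : lam 0 = 0) (q : ℕ) (hq : 0 < q)
    (hsemi : ∀ (c t : k), lam (c ^ q * t) = c * lam t)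
    (v : Fin n →₀ ℕ) (hv : ∀ i, v i < q)
    (s : Fin n →₀ ℕ) (c : k) (r : MvPolynomial (Fin n) k) :
    contr lam h0 q hq v (monomial s c ^ q * r)
      = monomial s c * contr lam h0 q hq v r := by
  apply MvPolynomial.ext
  intro m
  rw [coeff_contr, monomial_pow, coeff_monomial_mul', coeff_monomial_mul']
  by_cases hle : s ≤ m
  · have hle' : q • s ≤ q • m + v := by
      intro i
      simp only [Finsupp.coe_add, Finsupp.coe_smul, Pi.add_apply, Pi.smul_apply, smul_eq_mul]
      have := hle i
      nlinarith [hv i]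
    rw [if_pos hle, if_pos hle', coeff_contr]
    have harith : q • m + v - q • s = q • (m - s) + v := by
      ext i
      simp only [Finsupp.coe_add, Finsupp.coe_smul, Finsupp.coe_tsub, Pi.add_apply,
        Pi.smul_apply, Pi.sub_apply, smul_eq_mul]
      have := hle i
      have hq1 : q * s i ≤ q * m i := Nat.mul_le_mul_left q this
      have hq2 : q * (m i - s i) + q * s i = q * m i := by
        rw [← Nat.mul_add]
        congr 1
        omega
      omega
    rw [harith, hsemi]
  · have hle' : ¬ q • s ≤ q • m + v := by
      intro hcon
      apply hle
      intro i
      have := hcon i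
      simp only [Finsupp.coe_add, Finsupp.coe_smul, Pi.add_apply, Pi.smul_apply,
        smul_eq_mul] at this
      by_contra hlt
      push_neg at hlt
      have h1 : q * s i ≥ q * (m i + 1) := Nat.mul_le_mul_left q hlt
      have h2 : q * (m i + 1) = q * m i + q := by ring
      have := hv i
      omega
    rw [if_neg hle, if_neg hle', h0]

lemma contr_semi {p : ℕ} [Fact p.Prime] [CharP k p] {l : ℕ}
    (lam : k → k) (h0 : lam 0 = 0) (hadd : ∀ a b, lam (a + b) = lam a + lam b)
    (hsemi : ∀ (c t : k), lam (c ^ p ^ l * t) = c * lam t)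
    (hq : 0 < p ^ l) (v : Fin n →₀ ℕ) (hv : ∀ i, v i < p ^ l)
    (a r : MvPolynomial (Fin n) k) :
    contr lam h0 (p ^ l) hq v (a ^ p ^ l * r)
      = a * contr lam h0 (p ^ l) hq v r := by
  induction a using MvPolynomial.induction_on' with
  | monomial s c => exact contr_monomial_mul lam h0 (p ^ l) hq hsemi v hv s c r
  | add a b ha hb =>
      rw [add_pow_char_pow, add_mul, contr_add lam h0 hadd, ha, hb, add_mul]

/-! ### A basis of `k` over its subfield of `p^l`-th powers. -/

def Kq (k : Type) [Field k] (p l : ℕ) : Type := k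

instance (k : Type) [Field k] (p l : ℕ) : Field (Kq k p l) := inferInstanceAs (Field k)

def frobK (k : Type) [Field k] (p l : ℕ) [Fact p.Prime] [CharP k p] : Kq k p l →+* k :=
  iterateFrobenius k p l

instance (k : Type) [Field k] (p l : ℕ) [Fact p.Prime] [CharP k p] : Algebra (Kq k p l) k :=
  (frobK k p l).toAlgebra

/-- The identity map `Kq → k`. -/
def toK (k : Type) [Field k] (p l : ℕ) (c : Kq k p l) : k := c

section Basis

variable (k : Type) [Field k] (p l : ℕ) [Fact p.Prime] [CharP k p]

def lamB (β : Module.Basis.ofVectorSpaceIndex (Kq k p l) k) : k → k :=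
  fun t => toK k p l ((Module.Basis.ofVectorSpace (Kq k p l) k).repr t β)

lemma lamB_zero (β) : lamB k p l β 0 = 0 := by simp [lamB, toK]; rfl

lemma lamB_add (β) (a b : k) : lamB k p l β (a + b) = lamB k p l β a + lamB k p l β b := by
  simp [lamB, toK]; rfl

lemma kq_smul (c : Kq k p l) (t : k) : c • t = toK k p l c ^ p ^ l * t := by
  rw [Algebra.smul_def, RingHom.algebraMap_toAlgebra]
  rfl

lemma lamB_semi (β) (c t : k) :
    lamB k p l β (c ^ p ^ l * t) = c * lamB k p l β t := by
  have h : c ^ p ^ l * t = (show Kq k p l from c) • t := (kq_smul k p l c t).symm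
  rw [lamB, h, map_smul]
  rfl

lemma lamB_recover (s : Finset (Module.Basis.ofVectorSpaceIndex (Kq k p l) k)) (c : k)
    (h : ((Module.Basis.ofVectorSpace (Kq k p l) k).repr c).support ⊆ s) :
    ∑ β ∈ s, (lamB k p l β c) ^ p ^ l * (β : k) = c := by
  classical
  conv_rhs => rw [← (Module.Basis.ofVectorSpace (Kq k p l) k).linearCombination_repr c]
  rw [Finsupp.linearCombination_apply, Finsupp.sum]
  rw [Finset.sum_subset h]
  · apply Finset.sum_congr rfl
    intro β _
    rw [kq_smul, Module.Basis.ofVectorSpace_apply_self]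
    rfl
  · intro β _ hβ
    rw [kq_smul]
    have : toK k p l (((Module.Basis.ofVectorSpace (Kq k p l) k).repr c) β) = 0 := by
      have := Finsupp.notMem_support_iff.mp hβ
      rw [this]; rfl
    rw [this, zero_pow (pow_pos (Fact.out : p.Prime).pos l).ne', zero_mul]

end Basis

/-! ### The semilinear component maps `Λ_{λ,v} : F^{*l}(N) → N`. -/

section Lam

variable (k : Type) [Field k] (p : ℕ) [Fact p.Prime] [CharP k p] (n l : ℕ)
variable (N : Type) [AddCommGroup N] [Module (MvPolynomial (Fin n) k) N]

/-- The identity map `FrobTarget → R`. -/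
def ofT (b : FrobTarget k n p l) : MvPolynomial (Fin n) k := b

lemma hq0 : 0 < p ^ l := pow_pos (Fact.out : p.Prime).pos l

lemma frob_smul (r : MvPolynomial (Fin n) k) (b : FrobTarget k n p l) :
    r • b = toT k n p l (r ^ p ^ l * ofT k p n l b) := by
  rw [Algebra.smul_def, RingHom.algebraMap_toAlgebra]
  rfl

variable (lam : k → k) (h0 : lam 0 = 0) (hadd : ∀ a b, lam (a + b) = lam a + lam b)
  (hsemi : ∀ (c t : k), lam (c ^ p ^ l * t) = c * lam t)
  (v : Fin n →₀ ℕ) (hv : ∀ i, v i < p ^ l)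

def Lam : Fstar k n p l N →+ N :=
  TensorProduct.liftAddHom
    (AddMonoidHom.mk' (fun b : FrobTarget k n p l =>
      AddMonoidHom.mk' (fun y : N => contr lam h0 (p ^ l) (hq0 p l) v b • y)
        (fun y1 y2 => smul_add _ y1 y2))
      (fun b1 b2 => by
        ext y
        simp only [AddMonoidHom.mk'_apply, AddMonoidHom.add_apply]
        exact (congrArg (fun t => t • y)
          (contr_add lam h0 hadd (p ^ l) (hq0 p l) v b1 b2)).trans (add_smul _ _ _)))
    (fun r b y => by
      simp only [AddMonoidHom.mk'_apply]
      rw [frob_smul k p n l]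
      have hc : contr lam h0 (p ^ l) (hq0 p l) v (toT k n p l (r ^ p ^ l * ofT k p n l b))
          = r * contr lam h0 (p ^ l) (hq0 p l) v (ofT k p n l b) :=
        contr_semi lam h0 hadd hsemi (hq0 p l) v hv r (ofT k p n l b)
      rw [hc, mul_comm, mul_smul]
      rfl)

lemma Lam_tmul (b : FrobTarget k n p l) (y : N) :
    Lam k p n l N lam h0 hadd hsemi v hv (b ⊗ₜ[MvPolynomial (Fin n) k] y)
      = contr lam h0 (p ^ l) (hq0 p l) v b • y :=
  TensorProduct.liftAddHom_tmul _ _ _ _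

end Lam


/-- The identity map `FrobTarget → R`, with the same argument order as `ofT` above. -/

def topF (p n l : ℕ) : Fin n →₀ ℕ :=
  Finsupp.equivFunOnFinite.symm (fun _ : Fin n => p ^ l - 1)

lemma topF_apply (p n l : ℕ) (i : Fin n) : topF p n l i = p ^ l - 1 := rfl

lemma topF_lt (p : ℕ) [Fact p.Prime] (n l : ℕ) (i : Fin n) : topF p n l i < p ^ l := by
  rw [topF_apply]
  have := pow_pos (Fact.out : p.Prime).pos l
  omega

def vIdx (p n l : ℕ) (w : Fin n → Fin (p ^ l)) : Fin n →₀ ℕ :=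
  Finsupp.equivFunOnFinite.symm (fun i => (w i : ℕ))

lemma vIdx_apply (p n l : ℕ) (w : Fin n → Fin (p ^ l)) (i : Fin n) :
    vIdx p n l w i = (w i : ℕ) := rfl

lemma vIdx_lt (p n l : ℕ) (w : Fin n → Fin (p ^ l)) (i : Fin n) :
    vIdx p n l w i < p ^ l := (w i).isLt

lemma degree_univ {n : ℕ} (f : Fin n →₀ ℕ) : f.degree = ∑ i, f i :=
  Finset.sum_subset (Finset.subset_univ _) (fun i _ hi => Finsupp.notMem_support_iff.mp hi)

section Lam2

variable (k : Type) [Field k] (p : ℕ) [Fact p.Prime] [CharP k p] (n l : ℕ)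
variable (N : Type) [AddCommGroup N] [Module (MvPolynomial (Fin n) k) N]

lemma mv_smul_tmul (r : MvPolynomial (Fin n) k) (b : FrobTarget k n p l) (y : N) :
    r • tensorMk k n p l N b y
      = tensorMk k n p l N (toT k n p l (r * ofT k p n l b)) y := by
  have h1 : r • tensorMk k n p l N b y
      = (toT k n p l r) • (b ⊗ₜ[MvPolynomial (Fin n) k] y :
          FrobTarget k n p l ⊗[MvPolynomial (Fin n) k] N) := rfl
  rw [h1, TensorProduct.smul_tmul']
  show tensorMk k n p l N _ y = _
  congr 1

variable (lam : k → k) (h0 : lam 0 = 0) (hadd : ∀ a b, lam (a + b) = lam a + lam b)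
  (hsemi : ∀ (c t : k), lam (c ^ p ^ l * t) = c * lam t)

lemma Lam_tmul' (v : Fin n →₀ ℕ) (hv : ∀ i, v i < p ^ l)
    (b : FrobTarget k n p l) (y : N) :
    Lam k p n l N lam h0 hadd hsemi v hv (tensorMk k n p l N b y)
      = contr lam h0 (p ^ l) (hq0 p l) v (ofT k p n l b) • y :=
  TensorProduct.liftAddHom_tmul _ _ _ _

lemma contr_shift (v : Fin n →₀ ℕ) (hv : ∀ i, v i < p ^ l) (b : MvPolynomial (Fin n) k) :
    contr lam h0 (p ^ l) (hq0 p l) (topF p n l) (monomial (topF p n l - v) 1 * b)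
      = contr lam h0 (p ^ l) (hq0 p l) v b := by
  apply MvPolynomial.ext
  intro u
  rw [coeff_contr, coeff_contr, coeff_monomial_mul']
  have hle : topF p n l - v ≤ p ^ l • u + topF p n l := by
    intro i
    simp only [Finsupp.coe_add, Finsupp.coe_smul, Finsupp.coe_tsub, Pi.add_apply,
      Pi.smul_apply, Pi.sub_apply, smul_eq_mul, topF_apply]
    omega
  have hidx : p ^ l • u + topF p n l - (topF p n l - v) = p ^ l • u + v := by
    ext i
    simp only [Finsupp.coe_add, Finsupp.coe_smul, Finsupp.coe_tsub, Pi.add_apply,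
      Pi.smul_apply, Pi.sub_apply, smul_eq_mul, topF_apply]
    have := hv i
    omega
  rw [if_pos hle, one_mul, hidx]

lemma Lam_shift (v : Fin n →₀ ℕ) (hv : ∀ i, v i < p ^ l) (z : Fstar k n p l N) :
    Lam k p n l N lam h0 hadd hsemi v hv z
      = Lam k p n l N lam h0 hadd hsemi (topF p n l) (topF_lt p n l)
          ((monomial (topF p n l - v) (1 : k) : MvPolynomial (Fin n) k) • z) := by
  induction z using TensorProduct.induction_on with
  | zero =>
      show Lam k p n l N lam h0 hadd hsemi v hv (0 : Fstar k n p l N)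
        = Lam k p n l N lam h0 hadd hsemi (topF p n l) (topF_lt p n l)
            ((monomial (topF p n l - v) (1 : k) : MvPolynomial (Fin n) k) • (0 : Fstar k n p l N))
      rw [smul_zero, map_zero, map_zero]
  | tmul b y =>
      show Lam k p n l N lam h0 hadd hsemi v hv (tensorMk k n p l N b y)
        = Lam k p n l N lam h0 hadd hsemi (topF p n l) (topF_lt p n l)
            ((monomial (topF p n l - v) (1 : k) : MvPolynomial (Fin n) k) •
              tensorMk k n p l N b y)
      rw [mv_smul_tmul, Lam_tmul', Lam_tmul']
      show _ = contr lam h0 (p ^ l) (hq0 p l) (topF p n l)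
          (monomial (topF p n l - v) 1 * ofT k p n l b) • y
      rw [contr_shift k p n l lam h0 v hv (ofT k p n l b)]
  | add z1 z2 h1 h2 => erw [smul_add, map_add, map_add, h1, h2]

lemma Lam_vanish (𝓝 : ℤ → AddSubgroup N) (d : ℤ)
    (hd : ∀ b : ℤ, (n : ℤ) * ((p : ℤ) ^ l - 1) + (p : ℤ) ^ l * b ≠ d)
    (z : Fstar k n p l N) (hz : z ∈ FstarGrade k n p l N 𝓝 d) :
    Lam k p n l N lam h0 hadd hsemi (topF p n l) (topF_lt p n l) z = 0 := by
  induction hz using AddSubgroup.closure_induction with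
  | mem z hzmem =>
      obtain ⟨a, b, r, y, hr, hy, hab, rfl⟩ := hzmem
      rw [Lam_tmul']
      show contr lam h0 (p ^ l) (hq0 p l) (topF p n l) r • y = 0
      have hc0 : contr lam h0 (p ^ l) (hq0 p l) (topF p n l) r = 0 := by
        apply MvPolynomial.ext
        intro u
        rw [coeff_contr, coeff_zero]
        by_cases hc : coeff (p ^ l • u + topF p n l) r = 0
        · rw [hc, h0]
        · exfalso
          have hdeg : (p ^ l • u + topF p n l).degree = a := by
            have := (mem_homogeneousSubmodule _ _).mp hr hc
            rwa [Finsupp.degree_eq_weight_one]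
          have hdeg2 : (p ^ l • u + topF p n l).degree
              = p ^ l * u.degree + n * (p ^ l - 1) := by
            rw [degree_univ, degree_univ]
            have : ∀ i : Fin n, (p ^ l • u + topF p n l) i = p ^ l * u i + (p ^ l - 1) := by
              intro i
              simp only [Finsupp.coe_add, Finsupp.coe_smul, Pi.add_apply, Pi.smul_apply,
                smul_eq_mul, topF_apply]
            rw [Finset.sum_congr rfl (fun i _ => this i), Finset.sum_add_distrib,
              ← Finset.mul_sum, Finset.sum_const, Finset.card_univ, Fintype.card_fin,
              smul_eq_mul]
          have hq1 : (1 : ℕ) ≤ p ^ l := hq0 p l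
          apply hd (u.degree + b)
          have ha' : (a : ℤ) = (p : ℤ) ^ l * u.degree + n * ((p : ℤ) ^ l - 1) := by
            rw [← hdeg, hdeg2]
            push_cast [Nat.cast_sub hq1]
            ring
          rw [← hab, ha']
          ring
      rw [hc0, zero_smul]
  | zero => exact map_zero _
  | add z1 z2 _ _ h1 h2 => rw [map_add, h1, h2, add_zero]
  | neg z _ h1 => rw [map_neg, h1, neg_zero]

end Lam2

section Recon

variable (k : Type) [Field k] (p : ℕ) [Fact p.Prime] [CharP k p] (n l : ℕ)
variable (N : Type) [AddCommGroup N] [Module (MvPolynomial (Fin n) k) N]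

def contrHom (lam : k → k) (h0 : lam 0 = 0) (hadd : ∀ a b, lam (a + b) = lam a + lam b)
    (q : ℕ) (hq : 0 < q) (v : Fin n →₀ ℕ) :
    MvPolynomial (Fin n) k →+ MvPolynomial (Fin n) k :=
  AddMonoidHom.mk' (contr lam h0 q hq v) (contr_add lam h0 hadd q hq v)

lemma recon_monomial (s : Finset (Module.Basis.ofVectorSpaceIndex (Kq k p l) k))
    (m : Fin n →₀ ℕ) (c : k)
    (hc : ((Module.Basis.ofVectorSpace (Kq k p l) k).repr c).support ⊆ s) (y : N) :
    tensorMk k n p l N (toT k n p l (monomial m c)) y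
      = ∑ w : Fin n → Fin (p ^ l), ∑ β ∈ s,
          tensorMk k n p l N (toT k n p l (monomial (vIdx p n l w) (β : k)))
            (contr (lamB k p l β) (lamB_zero k p l β) (p ^ l) (hq0 p l) (vIdx p n l w)
              (monomial m c) • y) := by
  classical
  have hq : 0 < p ^ l := hq0 p l
  set w0 : Fin n → Fin (p ^ l) := fun i => ⟨m i % p ^ l, Nat.mod_lt _ hq⟩ with hw0
  set u0 : Fin n →₀ ℕ := Finsupp.equivFunOnFinite.symm (fun i => m i / p ^ l) with hu0
  have hmsplit : p ^ l • u0 + vIdx p n l w0 = m := by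
    ext i
    simp only [Finsupp.coe_add, Finsupp.coe_smul, Pi.add_apply, Pi.smul_apply, smul_eq_mul]
    show p ^ l * (m i / p ^ l) + m i % p ^ l = m i
    exact Nat.div_add_mod (m i) (p ^ l)
  rw [Finset.sum_eq_single_of_mem w0 (Finset.mem_univ w0)]
  · -- the w0 term
    have hcontr : ∀ β : Module.Basis.ofVectorSpaceIndex (Kq k p l) k,
        contr (lamB k p l β) (lamB_zero k p l β) (p ^ l) (hq0 p l)
          (vIdx p n l w0) (monomial m c) = monomial u0 (lamB k p l β c) := by
      intro β
      apply MvPolynomial.ext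
      intro u
      rw [coeff_contr, coeff_monomial, coeff_monomial]
      by_cases hu : u0 = u
      · subst hu
        rw [if_pos rfl, if_pos hmsplit.symm]
      · rw [if_neg hu, if_neg, lamB_zero]
        intro hcon
        apply hu
        ext i
        have := congrFun (congrArg (fun f : Fin n →₀ ℕ => (f : Fin n → ℕ)) hcon) i
        simp only [Finsupp.coe_add, Finsupp.coe_smul, Pi.add_apply, Pi.smul_apply,
          smul_eq_mul] at this
        show m i / p ^ l = u i
        have h2 : (w0 i : ℕ) = m i % p ^ l := rfl
        rw [vIdx_apply, h2] at this
        have h4 := Nat.div_add_mod (m i) (p ^ l)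
        have h5 : p ^ l * u i = p ^ l * (m i / p ^ l) := by omega
        exact (Nat.eq_of_mul_eq_mul_left hq h5).symm
    have step : ∀ β : Module.Basis.ofVectorSpaceIndex (Kq k p l) k,
        tensorMk k n p l N (toT k n p l (monomial (vIdx p n l w0) (β : k)))
          ((monomial u0 (lamB k p l β c) : MvPolynomial (Fin n) k) • y)
        = tensorMk k n p l N
            (toT k n p l (monomial m ((lamB k p l β c) ^ p ^ l * (β : k)))) y := by
      intro β
      have h1 : (toT k n p l (monomial (vIdx p n l w0) (β : k)))
            ⊗ₜ[MvPolynomial (Fin n) k]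
              ((monomial u0 (lamB k p l β c) : MvPolynomial (Fin n) k) • y)
          = ((monomial u0 (lamB k p l β c) : MvPolynomial (Fin n) k) •
              toT k n p l (monomial (vIdx p n l w0) (β : k)))
            ⊗ₜ[MvPolynomial (Fin n) k] y :=
        (TensorProduct.smul_tmul _ _ _).symm
      show _ = tensorMk k n p l N
          (toT k n p l (monomial m ((lamB k p l β c) ^ p ^ l * (β : k)))) y
      rw [tensorMk, h1, frob_smul k p n l]
      rw [tensorMk]
      congr 2
      show (monomial u0 (lamB k p l β c) : MvPolynomial (Fin n) k) ^ p ^ l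
          * monomial (vIdx p n l w0) (β : k)
        = (monomial m ((lamB k p l β c) ^ p ^ l * (β : k)) : MvPolynomial (Fin n) k)
      rw [monomial_pow, monomial_mul, hmsplit]
    have hsum2 : toT k n p l (monomial m c)
        = ∑ β ∈ s, (monomial m ((lamB k p l β c) ^ p ^ l * (β : k))
            : MvPolynomial (Fin n) k) := by
      show (monomial m c : MvPolynomial (Fin n) k) = _
      conv_lhs => rw [← lamB_recover k p l s c hc]
      exact map_sum (monomial m : k →ₗ[k] MvPolynomial (Fin n) k) _ s
    symm
    calc ∑ β ∈ s, tensorMk k n p l N (toT k n p l (monomial (vIdx p n l w0) (β : k)))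
          (contr (lamB k p l β) (lamB_zero k p l β) (p ^ l) (hq0 p l) (vIdx p n l w0)
            (monomial m c) • y)
        = ∑ β ∈ s, tensorMk k n p l N
            (toT k n p l (monomial m ((lamB k p l β c) ^ p ^ l * (β : k)))) y :=
          Finset.sum_congr rfl (fun β _ => by rw [hcontr β]; exact step β)
      _ = tensorMk k n p l N (toT k n p l (monomial m c)) y := by
          show _ = toT k n p l (monomial m c) ⊗ₜ[MvPolynomial (Fin n) k] y
          rw [hsum2]
          exact (TensorProduct.sum_tmul ..).symm
  · -- other w vanish
    intro w _ hw
    have hzero : ∀ β : Module.Basis.ofVectorSpaceIndex (Kq k p l) k,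
        contr (lamB k p l β) (lamB_zero k p l β) (p ^ l) (hq0 p l)
          (vIdx p n l w) (monomial m c) = 0 := by
      intro β
      apply MvPolynomial.ext
      intro u
      rw [coeff_contr, coeff_monomial, coeff_zero]
      rw [if_neg, lamB_zero]
      intro hcon
      apply hw
      funext i
      apply Fin.ext
      have := congrFun (congrArg (fun f : Fin n →₀ ℕ => (f : Fin n → ℕ)) hcon) i
      simp only [Finsupp.coe_add, Finsupp.coe_smul, Pi.add_apply, Pi.smul_apply,
        smul_eq_mul] at this
      rw [vIdx_apply] at this
      show (w i : ℕ) = (w0 i : ℕ)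
      have h2 : (w0 i : ℕ) = m i % p ^ l := rfl
      have h3 : (w i : ℕ) < p ^ l := (w i).isLt
      have h4 : m i % p ^ l = (w i : ℕ) := by
        rw [this, Nat.mul_add_mod, Nat.mod_eq_of_lt h3]
      rw [h2, h4]
    apply Finset.sum_eq_zero
    intro β _
    rw [hzero β, zero_smul, tensorMk, tmul_zero]; rfl
lemma recon_poly (s : Finset (Module.Basis.ofVectorSpaceIndex (Kq k p l) k))
    (r : MvPolynomial (Fin n) k)
    (hr : ∀ m, ((Module.Basis.ofVectorSpace (Kq k p l) k).repr (coeff m r)).support ⊆ s) (y : N) :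
    tensorMk k n p l N (toT k n p l r) y
      = ∑ w : Fin n → Fin (p ^ l), ∑ β ∈ s,
          tensorMk k n p l N (toT k n p l (monomial (vIdx p n l w) (β : k)))
            (contr (lamB k p l β) (lamB_zero k p l β) (p ^ l) (hq0 p l)
              (vIdx p n l w) r • y) := by
  classical
  have hstep1 : tensorMk k n p l N (toT k n p l r) y
      = ∑ m ∈ r.support, tensorMk k n p l N (toT k n p l (monomial m (coeff m r))) y := by
    show toT k n p l r ⊗ₜ[MvPolynomial (Fin n) k] y = _
    rw [show toT k n p l r
        = ∑ m ∈ r.support, toT k n p l (monomial m (coeff m r))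
      from (support_sum_monomial_coeff r).symm, TensorProduct.sum_tmul]
    rfl
  rw [hstep1,
    Finset.sum_congr rfl (fun m _ => recon_monomial k p n l N s m (coeff m r) (hr m) y),
    Finset.sum_comm]
  apply Finset.sum_congr rfl
  intro w _
  rw [Finset.sum_comm]
  apply Finset.sum_congr rfl
  intro β _
  have h2 : ∑ m ∈ r.support,
      tensorMk k n p l N (toT k n p l (monomial (vIdx p n l w) (β : k)))
        (contr (lamB k p l β) (lamB_zero k p l β) (p ^ l) (hq0 p l) (vIdx p n l w)
          (monomial m (coeff m r)) • y)
      = tensorMk k n p l N (toT k n p l (monomial (vIdx p n l w) (β : k)))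
          ((∑ m ∈ r.support, contr (lamB k p l β) (lamB_zero k p l β) (p ^ l) (hq0 p l)
            (vIdx p n l w) (monomial m (coeff m r))) • y) := by
    rw [Finset.sum_smul, tensorMk, TensorProduct.tmul_sum]
    rfl
  have h3 : (∑ m ∈ r.support, contr (lamB k p l β) (lamB_zero k p l β) (p ^ l) (hq0 p l)
      (vIdx p n l w) (monomial m (coeff m r)))
      = contr (lamB k p l β) (lamB_zero k p l β) (p ^ l) (hq0 p l) (vIdx p n l w) r := by
    have h4 := (map_sum (contrHom k n (lamB k p l β) (lamB_zero k p l β) (lamB_add k p l β)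
      (p ^ l) (hq0 p l) (vIdx p n l w)) (fun m => monomial m (coeff m r)) r.support).symm
    rw [support_sum_monomial_coeff] at h4
    exact h4
  rw [h2, h3]

lemma recon_z (z : Fstar k n p l N) :
    ∃ s0 : Finset (Module.Basis.ofVectorSpaceIndex (Kq k p l) k),
      z = ∑ w : Fin n → Fin (p ^ l), ∑ β ∈ s0,
        tensorMk k n p l N (toT k n p l (monomial (vIdx p n l w) (β : k)))
          (Lam k p n l N (lamB k p l β) (lamB_zero k p l β) (lamB_add k p l β)
            (lamB_semi k p l β) (vIdx p n l w) (vIdx_lt p n l w) z) := by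
  classical
  obtain ⟨T, hT⟩ := TensorProduct.exists_finset
    (z : FrobTarget k n p l ⊗[MvPolynomial (Fin n) k] N)
  set BB := Module.Basis.ofVectorSpace (Kq k p l) k with hBB
  set s0 : Finset (Module.Basis.ofVectorSpaceIndex (Kq k p l) k) :=
    T.biUnion (fun ip => (ofT k p n l ip.1).support.biUnion
      (fun m => (BB.repr (coeff m (ofT k p n l ip.1))).support)) with hs0
  have hr : ∀ ip ∈ T, ∀ m, (BB.repr (coeff m (ofT k p n l ip.1))).support ⊆ s0 := by
    intro ip hip m
    by_cases hm : m ∈ (ofT k p n l ip.1).support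
    · intro β hβ
      exact Finset.mem_biUnion.mpr ⟨ip, hip, Finset.mem_biUnion.mpr ⟨m, hm, hβ⟩⟩
    · rw [MvPolynomial.notMem_support_iff.mp hm]
      simp
  refine ⟨s0, ?_⟩
  have hz1 : z = ∑ ip ∈ T, tensorMk k n p l N ip.1 ip.2 := hT
  calc z = ∑ ip ∈ T, tensorMk k n p l N ip.1 ip.2 := hz1
    _ = ∑ ip ∈ T, ∑ w : Fin n → Fin (p ^ l), ∑ β ∈ s0,
          tensorMk k n p l N (toT k n p l (monomial (vIdx p n l w) (β : k)))
            (contr (lamB k p l β) (lamB_zero k p l β) (p ^ l) (hq0 p l)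
              (vIdx p n l w) (ofT k p n l ip.1) • ip.2) :=
        Finset.sum_congr rfl (fun ip hip =>
          recon_poly k p n l N s0 (ofT k p n l ip.1) (hr ip hip) ip.2)
    _ = ∑ w : Fin n → Fin (p ^ l), ∑ β ∈ s0, ∑ ip ∈ T,
          tensorMk k n p l N (toT k n p l (monomial (vIdx p n l w) (β : k)))
            (contr (lamB k p l β) (lamB_zero k p l β) (p ^ l) (hq0 p l)
              (vIdx p n l w) (ofT k p n l ip.1) • ip.2) := by
        rw [Finset.sum_comm]
        exact Finset.sum_congr rfl (fun w _ => Finset.sum_comm)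
    _ = ∑ w : Fin n → Fin (p ^ l), ∑ β ∈ s0,
          tensorMk k n p l N (toT k n p l (monomial (vIdx p n l w) (β : k)))
            (∑ ip ∈ T, contr (lamB k p l β) (lamB_zero k p l β) (p ^ l) (hq0 p l)
              (vIdx p n l w) (ofT k p n l ip.1) • ip.2) := by
        apply Finset.sum_congr rfl
        intro w _
        apply Finset.sum_congr rfl
        intro β _
        rw [tensorMk, TensorProduct.tmul_sum]
        rfl
    _ = ∑ w : Fin n → Fin (p ^ l), ∑ β ∈ s0,
          tensorMk k n p l N (toT k n p l (monomial (vIdx p n l w) (β : k)))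
            (Lam k p n l N (lamB k p l β) (lamB_zero k p l β) (lamB_add k p l β)
              (lamB_semi k p l β) (vIdx p n l w) (vIdx_lt p n l w) z) := by
        apply Finset.sum_congr rfl
        intro w _
        apply Finset.sum_congr rfl
        intro β _
        congr 1
        have h5 : ∀ ip ∈ T, contr (lamB k p l β) (lamB_zero k p l β) (p ^ l) (hq0 p l)
            (vIdx p n l w) (ofT k p n l ip.1) • ip.2
            = Lam k p n l N (lamB k p l β) (lamB_zero k p l β) (lamB_add k p l β)
                (lamB_semi k p l β) (vIdx p n l w) (vIdx_lt p n l w)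
                (tensorMk k n p l N ip.1 ip.2) := fun ip _ =>
          (Lam_tmul' k p n l N (lamB k p l β) (lamB_zero k p l β) (lamB_add k p l β)
            (lamB_semi k p l β) (vIdx p n l w) (vIdx_lt p n l w) ip.1 ip.2).symm
        rw [Finset.sum_congr rfl h5,
          ← map_sum (Lam k p n l N (lamB k p l β) (lamB_zero k p l β) (lamB_add k p l β)
            (lamB_semi k p l β) (vIdx p n l w) (vIdx_lt p n l w))
            (fun ip => tensorMk k n p l N ip.1 ip.2) T]
        rw [← hz1]

end Recon

end S4

open S4

set_option maxHeartbeats 1000000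
set_option synthInstance.maxHeartbeats 400000

/-- Let `k` be a field of characteristic `p > 0` and `R = k[x₁,…,xₙ]`,
graded by total degree.  Let `M` be a `ℤ`-graded `R`-module with `{d : M_d ≠ 0}` finite
and `M_{−n} = 0`.  Then there is `s ∈ ℕ` such that for every `l ≥ s` and every
`ℤ`-graded `R`-module `N`, the only degree-preserving `R`-linear map
`f : M → F^{*l}(N)` is the zero map. -/
theorem statement4 (k : Type) [Field k] (p : ℕ) [Fact p.Prime] [CharP k p] (n : ℕ)
    (M : Type) [AddCommGroup M] [Module (MvPolynomial (Fin n) k) M]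
    (𝓜 : ℤ → AddSubgroup M)
    (hMdec : DirectSum.IsInternal 𝓜)
    (hMsmul : ∀ (a : ℕ) (b : ℤ) (r : MvPolynomial (Fin n) k) (x : M),
      r ∈ homogeneousSubmodule (Fin n) k a → x ∈ 𝓜 b → r • x ∈ 𝓜 ((a : ℤ) + b))
    (hfin : {d : ℤ | 𝓜 d ≠ ⊥}.Finite)
    (hneg : 𝓜 (-(n : ℤ)) = ⊥) :
    ∃ s : ℕ, ∀ l : ℕ, s ≤ l →
      ∀ (N : Type) [AddCommGroup N] [Module (MvPolynomial (Fin n) k) N]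
        (𝓝 : ℤ → AddSubgroup N),
        DirectSum.IsInternal 𝓝 →
        (∀ (a : ℕ) (b : ℤ) (r : MvPolynomial (Fin n) k) (y : N),
          r ∈ homogeneousSubmodule (Fin n) k a → y ∈ 𝓝 b → r • y ∈ 𝓝 ((a : ℤ) + b)) →
        ∀ f : M →ₗ[MvPolynomial (Fin n) k] Fstar k n p l N,
          (∀ (d : ℤ) (x : M), x ∈ 𝓜 d → f x ∈ FstarGrade k n p l N 𝓝 d) →
          f = 0 := by
  classical
  set C := hfin.toFinset.sup (fun e => (e + n).natAbs) with hC
  refine ⟨C + 1, ?_⟩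
  intro l hl N _ _ 𝓝 hNdec hNsmul f hf
  have hp2 : 2 ≤ p := (Fact.out : p.Prime).two_le
  have hqC : C < p ^ l := by
    calc C < 2 ^ C := Nat.lt_two_pow_self (n := C)
      _ ≤ 2 ^ (C + 1) := Nat.pow_le_pow_right (by omega) (by omega)
      _ ≤ p ^ (C + 1) := Nat.pow_le_pow_left hp2 _
      _ ≤ p ^ l := Nat.pow_le_pow_right (by omega) hl
  have key : ∀ (d : ℤ) (x : M), x ∈ 𝓜 d → f x = 0 := by
    intro d x hx
    have hcomp : ∀ (β : Module.Basis.ofVectorSpaceIndex (Kq k p l) k) (w : Fin n → Fin (p ^ l)),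
        Lam k p n l N (lamB k p l β) (lamB_zero k p l β) (lamB_add k p l β)
          (lamB_semi k p l β) (vIdx p n l w) (vIdx_lt p n l w) (f x) = 0 := by
      intro β w
      rw [Lam_shift, ← map_smul]
      set x' := (monomial (topF p n l - vIdx p n l w) (1 : k) :
        MvPolynomial (Fin n) k) • x with hx'def
      by_cases hx0 : x' = 0
      · rw [hx0, map_zero, map_zero]
      · set d' := (((topF p n l - vIdx p n l w).degree : ℕ) : ℤ) + d with hd'def
        have hmem : x' ∈ 𝓜 d' :=
          hMsmul _ d _ x ((mem_homogeneousSubmodule _ _).mpr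
            (isHomogeneous_monomial 1 rfl)) hx
        have hne : 𝓜 d' ≠ ⊥ := by
          intro hbot
          rw [hbot, AddSubgroup.mem_bot] at hmem
          exact hx0 hmem
        have habs : (d' + n).natAbs ≤ C :=
          hC ▸ Finset.le_sup (f := fun e => (e + (n : ℤ)).natAbs)
            (hfin.mem_toFinset.mpr hne)
        have hd'ne : d' ≠ -(n : ℤ) := by
          intro h
          exact hne (by rw [h]; exact hneg)
        apply Lam_vanish k p n l N (lamB k p l β) (lamB_zero k p l β) (lamB_add k p l β)
          (lamB_semi k p l β) 𝓝 d' ?_ (f x') (hf d' x' hmem)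
        intro b hb
        have h1 : ((p : ℤ) ^ l) * ((n : ℤ) + b) = d' + n := by linarith [hb] <;> ring_nf
        have h2 : d' + (n : ℤ) ≠ 0 := by
          intro h
          exact hd'ne (by linarith)
        have h3 : (n : ℤ) + b ≠ 0 := by
          intro h
          rw [h, mul_zero] at h1
          exact h2 h1.symm
        have h4 : (p : ℤ) ^ l ≤ |d' + n| := by
          rw [← h1, abs_mul]
          have h5 : (1 : ℤ) ≤ |(n : ℤ) + b| := by
            rcases lt_trichotomy ((n : ℤ) + b) 0 with h | h | h
            · rw [abs_of_neg h]; omega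
            · exact absurd h h3
            · rw [abs_of_pos h]; omega
          have h6 : (0 : ℤ) < (p : ℤ) ^ l := by positivity
          calc (p : ℤ) ^ l = (p : ℤ) ^ l * 1 := by ring
            _ ≤ (p : ℤ) ^ l * |(n : ℤ) + b| := by
                exact mul_le_mul_of_nonneg_left h5 (le_of_lt h6)
            _ = |(p : ℤ) ^ l| * |(n : ℤ) + b| := by rw [abs_of_pos h6]
        have h7 : |d' + (n : ℤ)| ≤ C := by
          rw [Int.abs_eq_natAbs]
          exact_mod_cast habs
        have h8 : ((p : ℕ) ^ l : ℤ) ≤ (C : ℤ) := by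
          push_cast
          exact le_trans h4 h7
        have h9 : ((C : ℕ) : ℤ) < ((p : ℕ) ^ l : ℤ) := by exact_mod_cast hqC
        omega
    obtain ⟨s0, hz⟩ := recon_z k p n l N (f x)
    rw [hz]
    apply Finset.sum_eq_zero
    intro w _
    apply Finset.sum_eq_zero
    intro β _
    rw [hcomp β w, tensorMk, tmul_zero]; rfl
  apply LinearMap.ext
  intro x
  obtain ⟨y, hy⟩ := hMdec.surjective x
  rw [LinearMap.zero_apply, ← hy]
  clear hy
  induction y using DirectSum.induction_on with
  | zero => rw [map_zero, map_zero]
  | of i m =>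
      rw [DirectSum.coeAddMonoidHom_of]
      exact key i m m.2
  | add a b ha hb => rw [map_add, map_add, ha, hb, add_zero]
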